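/- Let C ⊆ ℝ^n be nonempty, closed and convex, let g, h : ℝ^n → ℝ be differentiable with g ρ_g-convex on C and h ρ_h-convex on C (ρ_g, ρ_h ≥ 0), set f = g − h, and let ᾱ > 0 and γ ∈ [0, (ρ_g + ρ_h)/(1 + (1+ᾱ)²)). Let sequences (x^k)_{k≥0}, (z^k)_{k≥0} in ℝ^n and (α_k)_{k≥0} in ℝ satisfy, with x^{−1} := x^0 and for every k ≥ 0: (a) z^k ∈ C and z^k minimizes u ↦ g(u) − ⟨∇h(x^k) + γ(x^k − x^{k−1}), u⟩ over C; (b) α_k ∈ [0, ᾱ]; (c) x^{k+1} = z^k + α_k(z^k − x^k); (d) x^{k+1} ∈ C; (e) f(x^{k+1}) ≤ f(z^k). Define E_k := f(x^k) + ((ρ_g + ρ_h − γ)/(2(1+ᾱ)²))·‖x^k − x^{k−1}‖². Then for every k ≥ 1, E_{k+1} ≤ E_k − ((ρ_g + ρ_h − γ(1 + (1+ᾱ)²))/(2(1+ᾱ)²))·‖x^k − x^{k−1}‖². -/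

import Mathlib

open scoped RealInnerProductSpace

open Set Filter

section aux
variable {F : Type*} [NormedAddCommGroup F] [InnerProductSpace ℝ F] [CompleteSpace F]

/-- tangent line inequality along a segment for convex functions -/
lemma slope_tangent {C : Set F} {ψ : F → ℝ} {x u : F} {D : ℝ}
    (hconv : ConvexOn ℝ C ψ) (hx : x ∈ C) (hu : u ∈ C)
    (hd : HasDerivAt (fun t : ℝ => ψ (x + t • (u - x))) D 0) :
    ψ x + D ≤ ψ u := by
  set A : ℝ →ᵃ[ℝ] F := AffineMap.lineMap x u with hA
  have hfun : (fun t : ℝ => ψ (x + t • (u - x))) = ψ ∘ A := by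
    funext t
    show ψ _ = ψ (A t)
    congr 1
    simp only [hA, AffineMap.lineMap_apply_module]
    module
  have hsub : Icc (0:ℝ) 1 ⊆ A ⁻¹' C := fun t ht => hconv.1.lineMap_mem hx hu ht
  have hFconv : ConvexOn ℝ (Icc (0:ℝ) 1) (ψ ∘ A) :=
    (hconv.comp_affineMap A).subset hsub (convex_Icc 0 1)
  rw [hfun] at hd
  have hs := hFconv.le_slope_of_hasDerivAt (by norm_num : (0:ℝ) ∈ Icc (0:ℝ) 1)
    (by norm_num : (1:ℝ) ∈ Icc (0:ℝ) 1) one_pos hd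
  rw [slope_def_field] at hs
  simp only [Function.comp_apply, hA, AffineMap.lineMap_apply_zero,
    AffineMap.lineMap_apply_one] at hs
  have : D ≤ ψ u - ψ x := by simpa using hs
  linarith

omit [CompleteSpace F] in
lemma line_hasDerivAt (x u : F) :
    HasDerivAt (fun t : ℝ => x + t • (u - x)) (u - x) 0 := by
  simpa using (((hasDerivAt_id (0:ℝ)).smul_const (u - x)).const_add x)

/-- strong convexity tangent inequality -/
lemma strong_tangent {C : Set F} {φ : F → ℝ} {ρ : ℝ} {p x u : F}
    (hconv : ConvexOn ℝ C (fun w => φ w - ρ / 2 * ‖w‖ ^ 2))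
    (hx : x ∈ C) (hu : u ∈ C) (hgrad : HasGradientAt φ p x) :
    φ x + ⟪p, u - x⟫ + ρ / 2 * ‖u - x‖ ^ 2 ≤ φ u := by
  have hline := line_hasDerivAt x u
  have hx0 : HasFDerivAt φ (InnerProductSpace.toDual ℝ F p)
      ((fun t : ℝ => x + t • (u - x)) 0) := by
    simpa using hgrad.hasFDerivAt
  have hcomp : HasDerivAt (fun t : ℝ => φ (x + t • (u - x))) ⟪p, u - x⟫ 0 := by
    simpa [InnerProductSpace.toDual_apply_apply, Function.comp_def] using hx0.comp_hasDerivAt 0 hline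
  have hq : HasDerivAt (fun t : ℝ => ρ / 2 * ‖x + t • (u - x)‖ ^ 2) (ρ * ⟪x, u - x⟫) 0 := by
    have h := (HasDerivAt.inner ℝ hline hline).const_mul (ρ / 2)
    have hfun : (fun t : ℝ => ρ / 2 * ‖x + t • (u - x)‖ ^ 2)
        = fun t : ℝ => ρ / 2 * ⟪x + t • (u - x), x + t • (u - x)⟫ := by
      funext t; rw [real_inner_self_eq_norm_sq]
    rw [hfun]
    refine h.congr_deriv ?_
    simp [real_inner_comm]
    ring
  have hD : HasDerivAt (fun t : ℝ => φ (x + t • (u - x)) - ρ / 2 * ‖x + t • (u - x)‖ ^ 2)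
      (⟪p, u - x⟫ - ρ * ⟪x, u - x⟫) 0 := hcomp.sub hq
  have key := slope_tangent hconv hx hu hD
  have e1 : ‖u - x‖ ^ 2 = ‖u‖ ^ 2 - 2 * ⟪x, u⟫ + ‖x‖ ^ 2 := by
    rw [← real_inner_self_eq_norm_sq, ← real_inner_self_eq_norm_sq,
      ← real_inner_self_eq_norm_sq]
    simp [inner_sub_sub_self, real_inner_comm u x]
    rw [norm_sub_sq_real]
  have e2 : ⟪x, u - x⟫ = ⟪x, u⟫ - ‖x‖ ^ 2 := by
    rw [inner_sub_right, real_inner_self_eq_norm_sq]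
  have hre : φ x + ⟪p, u - x⟫ + ρ / 2 * ‖u - x‖ ^ 2
      = (φ x - ρ / 2 * ‖x‖ ^ 2 + (⟪p, u - x⟫ - ρ * ⟪x, u - x⟫)) + ρ / 2 * ‖u‖ ^ 2 := by
    rw [e1, e2]; ring
  linarith [key, hre.le, hre.ge]

/-- strong convexity inequality at a constrained minimizer -/
lemma min_strong {C : Set F} {ψ : F → ℝ} {ρ : ℝ} {z u : F} (hρ : 0 ≤ ρ)
    (hconv : ConvexOn ℝ C (fun w => ψ w - ρ / 2 * ‖w‖ ^ 2))
    (hz : z ∈ C) (hu : u ∈ C) (hmin : ∀ w ∈ C, ψ z ≤ ψ w) :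
    ψ z + ρ / 2 * ‖u - z‖ ^ 2 ≤ ψ u := by
  set N := ‖u - z‖ ^ 2 with hN
  have key : ∀ t : ℝ, t ∈ Ioo (0:ℝ) 1 → ψ z + ρ / 2 * ((1 - t) * N) ≤ ψ u := by
    intro t ht
    have ha : (0:ℝ) ≤ 1 - t := by linarith [ht.2]
    have hb : (0:ℝ) ≤ t := ht.1.le
    have hab : (1 - t) + t = 1 := by ring
    have hwC : (1 - t) • z + t • u ∈ C := hconv.1 hz hu ha hb hab
    have hcvx := hconv.2 hz hu ha hb hab
    have hm := hmin _ hwC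
    have hw2 : ‖(1 - t) • z + t • u‖ ^ 2
        = (1 - t) ^ 2 * ‖z‖ ^ 2 + 2 * ((1 - t) * t) * ⟪z, u⟫ + t ^ 2 * ‖u‖ ^ 2 := by
      rw [← real_inner_self_eq_norm_sq, ← real_inner_self_eq_norm_sq,
        ← real_inner_self_eq_norm_sq]
      simp [inner_add_add_self, real_inner_smul_left, real_inner_smul_right,
        real_inner_comm u z]
      rw [norm_add_sq_real, norm_smul, norm_smul, real_inner_smul_left, real_inner_smul_right,
        mul_pow, mul_pow, Real.norm_eq_abs, Real.norm_eq_abs, sq_abs, sq_abs, real_inner_comm]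
      ring
    have hN2 : N = ‖u‖ ^ 2 - 2 * ⟪z, u⟫ + ‖z‖ ^ 2 := by
      rw [hN, ← real_inner_self_eq_norm_sq, ← real_inner_self_eq_norm_sq,
        ← real_inner_self_eq_norm_sq]
      simp [inner_sub_sub_self, real_inner_comm u z]
      rw [norm_sub_sq_real]
    simp only [smul_eq_mul] at hcvx
    have hid : (1 - t) * (ψ z - ρ / 2 * ‖z‖ ^ 2) + t * (ψ u - ρ / 2 * ‖u‖ ^ 2)
        = (1 - t) * ψ z + t * ψ u - ρ / 2 * ‖(1 - t) • z + t • u‖ ^ 2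
          - ρ / 2 * (t * (1 - t) * N) := by
      rw [hw2, hN2]; ring
    have h2 : ρ / 2 * (t * (1 - t) * N) ≤ t * (ψ u - ψ z) := by linarith
    have h3 : t * (ρ / 2 * ((1 - t) * N)) = ρ / 2 * (t * (1 - t) * N) := by ring
    have h4 : t * (ρ / 2 * ((1 - t) * N)) ≤ t * (ψ u - ψ z) := by rw [h3]; exact h2
    have h5 := (mul_le_mul_iff_right₀ ht.1).mp h4
    linarith
  have hlim : Tendsto (fun t : ℝ => ψ z + ρ / 2 * ((1 - t) * N)) (nhdsWithin 0 (Ioi 0))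
      (nhds (ψ z + ρ / 2 * N)) := by
    have hc : Continuous (fun t : ℝ => ψ z + ρ / 2 * ((1 - t) * N)) := by continuity
    have := hc.tendsto 0
    simp only [sub_zero, one_mul] at this
    exact this.mono_left nhdsWithin_le_nhds
  refine le_of_tendsto hlim ?_
  filter_upwards [Ioo_mem_nhdsGT_of_mem (by norm_num : (0:ℝ) ∈ Ico (0:ℝ) 1)] with t ht
  exact key t ht

end aux

set_option maxHeartbeats 1000000 in
/-- Sufficient descent property of HDCA-LI (Theorem 2.4, first item).
Here `x (k-1)` uses truncated subtraction on `ℕ`, so `x (0-1) = x 0`, encoding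
the convention `x⁻¹ := x⁰`. -/
theorem stmt1 {n : ℕ} (C : Set (EuclideanSpace ℝ (Fin n)))
    (hCne : C.Nonempty) (hCcl : IsClosed C) (hCcv : Convex ℝ C)
    (g h : EuclideanSpace ℝ (Fin n) → ℝ)
    (g' h' : EuclideanSpace ℝ (Fin n) → EuclideanSpace ℝ (Fin n))
    (hg : ∀ u, HasGradientAt g (g' u) u) (hh : ∀ u, HasGradientAt h (h' u) u)
    (ρg ρh : ℝ) (hρg : 0 ≤ ρg) (hρh : 0 ≤ ρh)
    (hgconv : ConvexOn ℝ C (fun u => g u - ρg / 2 * ‖u‖ ^ 2))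
    (hhconv : ConvexOn ℝ C (fun u => h u - ρh / 2 * ‖u‖ ^ 2))
    (abar γ : ℝ) (habar : 0 < abar) (hγ0 : 0 ≤ γ) (hγ1 : γ < (ρg + ρh) / (1 + (1 + abar) ^ 2))
    (x z : ℕ → EuclideanSpace ℝ (Fin n)) (α : ℕ → ℝ)
    (hzC : ∀ k, z k ∈ C)
    (hmin : ∀ k, ∀ u ∈ C,
      g (z k) - ⟪h' (x k) + γ • (x k - x (k - 1)), z k⟫ ≤
        g u - ⟪h' (x k) + γ • (x k - x (k - 1)), u⟫)
    (hα : ∀ k, α k ∈ Set.Icc (0 : ℝ) abar)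
    (hupd : ∀ k, x (k + 1) = z k + α k • (z k - x k))
    (hxC : ∀ k, x (k + 1) ∈ C)
    (hdec : ∀ k, g (x (k + 1)) - h (x (k + 1)) ≤ g (z k) - h (z k)) :
    ∀ k ≥ 1,
      (g (x (k + 1)) - h (x (k + 1))) +
          (ρg + ρh - γ) / (2 * (1 + abar) ^ 2) * ‖x (k + 1) - x k‖ ^ 2 ≤
        ((g (x k) - h (x k)) +
            (ρg + ρh - γ) / (2 * (1 + abar) ^ 2) * ‖x k - x (k - 1)‖ ^ 2) -
          (ρg + ρh - γ * (1 + (1 + abar) ^ 2)) / (2 * (1 + abar) ^ 2) *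
            ‖x k - x (k - 1)‖ ^ 2 := by
  intro k hk
  obtain ⟨m, rfl⟩ : ∃ m, k = m + 1 := ⟨k - 1, (Nat.succ_pred_eq_of_pos hk).symm⟩
  set a := x (m + 1) with ha
  have haC : a ∈ C := hxC m
  set b := x (m + 1 - 1) with hb
  set w := z (m + 1) with hw
  set c := x (m + 1 + 1) with hc
  set v : EuclideanSpace ℝ (Fin n) := h' a + γ • (a - b) with hv
  -- positivity facts
  have hP : (0:ℝ) < (1 + abar) ^ 2 := by positivity
  have h1P : (0:ℝ) < 1 + (1 + abar) ^ 2 := by positivity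
  have hγS : γ * (1 + (1 + abar) ^ 2) < ρg + ρh := (lt_div_iff₀ h1P).mp hγ1
  have hSγ : 0 ≤ ρg + ρh - γ := by nlinarith
  -- Step A : minimizer strong convexity for ψ = g - ⟪v, ·⟫
  have hlin : ConvexOn ℝ C (fun u : EuclideanSpace ℝ (Fin n) => -⟪v, u⟫) := by
    refine ⟨hCcv, fun p hp q hq s t hs ht hst => le_of_eq ?_⟩
    show -⟪v, s • p + t • q⟫ = s • -⟪v, p⟫ + t • -⟪v, q⟫
    rw [inner_add_right, real_inner_smul_right, real_inner_smul_right,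
      smul_eq_mul, smul_eq_mul]
    ring
  have hψconv : ConvexOn ℝ C
      (fun u : EuclideanSpace ℝ (Fin n) => (g u - ⟪v, u⟫) - ρg / 2 * ‖u‖ ^ 2) := by
    have heq : (fun u : EuclideanSpace ℝ (Fin n) => (g u - ⟪v, u⟫) - ρg / 2 * ‖u‖ ^ 2)
        = fun u => (g u - ρg / 2 * ‖u‖ ^ 2) + -⟪v, u⟫ := by
      funext u; ring
    rw [heq]
    exact hgconv.add hlin
  have hminw : ∀ u ∈ C, (fun u => g u - ⟪v, u⟫) w ≤ (fun u => g u - ⟪v, u⟫) u := by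
    intro u hu
    exact hmin (m + 1) u hu
  have stepA := min_strong hρg hψconv (show w ∈ C from hzC (m + 1)) haC hminw
  -- stepA : g w - ⟪v, w⟫ + ρg/2 * ‖a - w‖^2 ≤ g a - ⟪v, a⟫
  have stepB := strong_tangent hhconv haC (show w ∈ C from hzC (m + 1)) (hh a)
  -- stepB : h a + ⟪h' a, w - a⟫ + ρh/2 * ‖w - a‖^2 ≤ h w
  have hnorm_aw : ‖a - w‖ = ‖w - a‖ := norm_sub_rev a w
  set A := ‖w - a‖ ^ 2 with hA
  set B := ‖a - b‖ ^ 2 with hB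
  set D := ‖c - a‖ ^ 2 with hD
  -- inner product expansions
  have hinner : ⟪v, a⟫ - ⟪v, w⟫ = -⟪h' a, w - a⟫ + γ * ⟪a - b, a - w⟫ := by
    rw [hv]
    rw [show ⟪h' a + γ • (a - b), a⟫ - ⟪h' a + γ • (a - b), w⟫
        = ⟪h' a + γ • (a - b), a - w⟫ from by rw [inner_sub_right]]
    rw [inner_add_left, real_inner_smul_left]
    have hnn : ⟪h' a, a - w⟫ = -⟪h' a, w - a⟫ := by
      rw [show a - w = -(w - a) from by abel, inner_neg_right]
    rw [hnn]
  -- Cauchy–Schwarz type bound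
  have hCS' : -2 * ⟪a - b, a - w⟫ ≤ B + A := by
    have h0 : (0:ℝ) ≤ ‖(a - b) + (a - w)‖ ^ 2 := sq_nonneg _
    have hexp : ‖(a - b) + (a - w)‖ ^ 2
        = B + 2 * ⟪a - b, a - w⟫ + ‖a - w‖ ^ 2 := by
      rw [hB, ← real_inner_self_eq_norm_sq, ← real_inner_self_eq_norm_sq,
        ← real_inner_self_eq_norm_sq, inner_add_add_self,
        real_inner_comm (a - w) (a - b)]
      ring
    rw [hexp] at h0
    have hAA : ‖a - w‖ ^ 2 = A := by rw [hA, hnorm_aw]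
    rw [hAA] at h0
    linarith
  -- update relation
  have hd1 : c - a = (1 + α (m + 1)) • (w - a) := by
    rw [hc, hupd (m + 1), ← hw, ← ha, add_smul, one_smul]
    abel
  have hα1 := hα (m + 1)
  have hDA : D = (1 + α (m + 1)) ^ 2 * A := by
    rw [hD, hd1, norm_smul, mul_pow, Real.norm_eq_abs, sq_abs, hA]
  have hDPA : D ≤ (1 + abar) ^ 2 * A := by
    rw [hDA]
    have h1 : (1 + α (m + 1)) ^ 2 ≤ (1 + abar) ^ 2 := by nlinarith [hα1.1, hα1.2]
    nlinarith [sq_nonneg ‖w - a‖]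
  -- main descent inequality
  have hγCS := mul_le_mul_of_nonneg_left hCS' hγ0
  have hγCS1 : γ * (-2 * ⟪a - b, a - w⟫) = -2 * (γ * ⟪a - b, a - w⟫) := by ring
  have hγCS2 : γ * (B + A) = γ * B + γ * A := by ring
  have hmain : g c - h c ≤ (g a - h a) - (ρg + ρh - γ) / 2 * A + γ / 2 * B := by
    have hAeq : ‖a - w‖ ^ 2 = A := by rw [hA, hnorm_aw]
    rw [hAeq] at stepA
    have hdk : g c - h c ≤ g w - h w := hdec (m + 1)
    linarith [stepA, stepB, hinner, hγCS, hγCS1, hγCS2, hdk]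
  -- coefficient manipulations
  have hc1 : 0 ≤ (ρg + ρh - γ) / (2 * (1 + abar) ^ 2) := div_nonneg hSγ (by positivity)
  have key1 : (ρg + ρh - γ) / (2 * (1 + abar) ^ 2) * D ≤ (ρg + ρh - γ) / 2 * A := by
    have e : (ρg + ρh - γ) / (2 * (1 + abar) ^ 2) * ((1 + abar) ^ 2 * A)
        = (ρg + ρh - γ) / 2 * A := by
      field_simp
    calc (ρg + ρh - γ) / (2 * (1 + abar) ^ 2) * D
        ≤ (ρg + ρh - γ) / (2 * (1 + abar) ^ 2) * ((1 + abar) ^ 2 * A) :=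
          mul_le_mul_of_nonneg_left hDPA hc1
      _ = (ρg + ρh - γ) / 2 * A := e
  have key2 : (ρg + ρh - γ) / (2 * (1 + abar) ^ 2) * B
      - (ρg + ρh - γ * (1 + (1 + abar) ^ 2)) / (2 * (1 + abar) ^ 2) * B = γ / 2 * B := by
    field_simp
    ring
  linarith [hmain, key1, key2]
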